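/- Let P̂ ∈ ℝ^{m×k} with k < m satisfy P̂ ≥ 0, P̂·1 ≤ 1 (row sums at most 1), and 1ᵀP̂ = 1ᵀ (each column sums to 1). Then there exists a matrix B ∈ ℝ^{m×(m−k)} with nonnegative entries such that the augmented matrix [P̂ B] ∈ ℝ^{m×m} is doubly stochastic. -/

import Mathlib

open Matrix Finset Real

def IsDoublyStochastic {n : ℕ} (P : Matrix (Fin n) (Fin n) ℝ) : Prop :=
  (∀ i j, 0 ≤ P i j) ∧ (∀ i, ∑ j, P i j = 1) ∧ (∀ j, ∑ i, P i j = 1)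

def IsPermutationMatrix {n : ℕ} (Q : Matrix (Fin n) (Fin n) ℝ) : Prop :=
  (∀ i j, Q i j = 0 ∨ Q i j = 1) ∧ (∀ i, ∑ j, Q i j = 1) ∧ (∀ j, ∑ i, Q i j = 1)
theorem augment_to_doubly_stochastic {m k : ℕ} (hk : k < m)
    (Phat : Matrix (Fin m) (Fin k) ℝ)
    (h0 : ∀ i j, 0 ≤ Phat i j)
    (hrow : ∀ i, ∑ j, Phat i j ≤ 1)
    (hcol : ∀ j, ∑ i, Phat i j = 1) :
    ∃ B : Matrix (Fin m) (Fin (m - k)) ℝ,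
      (∀ i j, 0 ≤ B i j) ∧
      (∀ i, (∑ j, Phat i j) + (∑ j, B i j) = 1) ∧
      (∀ j, ∑ i, B i j = 1) := by
  have hn : 0 < m - k := Nat.sub_pos_of_lt hk
  have hnR : (0:ℝ) < (m - k : ℕ) := by exact_mod_cast hn
  refine ⟨fun i _ => (1 - ∑ j, Phat i j) / (m - k : ℕ), ?_, ?_, ?_⟩
  · intro i j
    exact div_nonneg (by linarith [hrow i]) hnR.le
  · intro i
    rw [Finset.sum_const, card_univ, Fintype.card_fin]
    rw [nsmul_eq_mul, mul_div_assoc', mul_div_cancel_left₀ _ hnR.ne']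
    ring
  · intro j
    have htot : ∑ i, ∑ j, Phat i j = k := by
      rw [show ∑ i, ∑ j, Phat i j = ∑ j, ∑ i, Phat i j from Finset.sum_comm]
      simp [hcol]
    rw [← Finset.sum_div]
    have : ∑ i, (1 - ∑ j, Phat i j) = (m : ℝ) - k := by
      rw [Finset.sum_sub_distrib, htot, Finset.sum_const, card_univ,
        Fintype.card_fin, nsmul_eq_mul, mul_one]
    rw [this, ← Nat.cast_sub hk.le]
    exact div_self hnR.ne'
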